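/- For positive definite Hermitian matrices A and B, the quantity d(A,B)² := tr(A) + tr(B) - 2·tr((B^{1/2} A B^{1/2})^{1/2}) is nonnegative, and it is zero if and only if A = B. -/

import Mathlib

open Matrix
open scoped ComplexOrder

noncomputable def Matrix.PosSemidef.sqrt {n 𝕜 : Type*} [Fintype n] [DecidableEq n] [RCLike 𝕜]
    {A : Matrix n n 𝕜} (hA : A.PosSemidef) : Matrix n n 𝕜 :=
  (hA.1.eigenvectorUnitary : Matrix n n 𝕜) * diagonal ((↑) ∘ (√·) ∘ hA.1.eigenvalues : n → 𝕜) *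
    (star hA.1.eigenvectorUnitary : Matrix n n 𝕜)

section SqrtPort
open scoped MatrixOrder

lemma Matrix.PosSemidef.sqrt_eq_cfcSqrt {n 𝕜 : Type*} [Fintype n] [DecidableEq n] [RCLike 𝕜]
    {A : Matrix n n 𝕜} (hA : A.PosSemidef) : hA.sqrt = CFC.sqrt A := by
  rw [CFC.sqrt_eq_cfc, cfc_nnreal_eq_real _ A, hA.1.cfc_eq]
  simp only [IsHermitian.cfc, Real.coe_sqrt, Real.coe_toNNReal', Matrix.PosSemidef.sqrt,
    Unitary.conjStarAlgAut_apply]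
  congr 3
  funext i
  simp [Real.sqrt_eq_zero', hA.eigenvalues_nonneg i]

lemma Matrix.PosSemidef.posSemidef_sqrt {n 𝕜 : Type*} [Fintype n] [DecidableEq n] [RCLike 𝕜]
    {A : Matrix n n 𝕜} (hA : A.PosSemidef) : hA.sqrt.PosSemidef := by
  rw [hA.sqrt_eq_cfcSqrt]
  exact (CFC.sqrt_nonneg A).posSemidef

lemma Matrix.PosSemidef.sqrt_mul_self {n 𝕜 : Type*} [Fintype n] [DecidableEq n] [RCLike 𝕜]
    {A : Matrix n n 𝕜} (hA : A.PosSemidef) : hA.sqrt * hA.sqrt = A := by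
  rw [hA.sqrt_eq_cfcSqrt]
  exact CFC.sqrt_mul_sqrt_self A hA.nonneg

lemma Matrix.PosSemidef.eq_sqrt_of_sq_eq {n 𝕜 : Type*} [Fintype n] [DecidableEq n] [RCLike 𝕜]
    {A B : Matrix n n 𝕜} (hA : A.PosSemidef) (hB : B.PosSemidef) (hAB : A ^ 2 = B) :
    A = hB.sqrt := by
  rw [hB.sqrt_eq_cfcSqrt, ← hAB, CFC.sqrt_sq A hA.nonneg]

end SqrtPort

lemma trace_ct_mul_self_re (n : ℕ) (D : Matrix (Fin n) (Fin n) ℂ) :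
    (trace (Dᴴ * D)).re = ∑ j, ∑ i, Complex.normSq (D i j) := by
  simp only [Matrix.trace, Matrix.diag, Matrix.mul_apply, Matrix.conjTranspose_apply]
  rw [Complex.re_sum]
  refine Finset.sum_congr rfl fun j _ => ?_
  rw [Complex.re_sum]
  refine Finset.sum_congr rfl fun i _ => ?_
  simp [Complex.normSq_apply, Complex.mul_re]

set_option maxHeartbeats 1000000 in
theorem hellinger_nonneg_eq_zero_iff (n : ℕ)
    (A B : Matrix (Fin n) (Fin n) ℂ) (hA : A.PosDef) (hB : B.PosDef)
    (hS : (hB.posSemidef.sqrt * A * hB.posSemidef.sqrt).PosSemidef) :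
    0 ≤ A.trace.re + B.trace.re - 2 * hS.sqrt.trace.re ∧
      (A.trace.re + B.trace.re - 2 * hS.sqrt.trace.re = 0 ↔ A = B) := by
  set Y := hB.posSemidef.sqrt with hYdef
  set X := hA.posSemidef.sqrt with hXdef
  set C := hS.sqrt with hCdef
  have hYH : Yᴴ = Y := hB.posSemidef.posSemidef_sqrt.1
  have hXH : Xᴴ = X := hA.posSemidef.posSemidef_sqrt.1
  have hCH : Cᴴ = C := hS.posSemidef_sqrt.1
  have hYY : Y * Y = B := hB.posSemidef.sqrt_mul_self
  have hXX : X * X = A := hA.posSemidef.sqrt_mul_self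
  have hCC : C * C = Y * A * Y := hS.sqrt_mul_self
  -- determinants
  have hdetA : A.det ≠ 0 := hA.det_pos.ne'
  have hdetB : B.det ≠ 0 := hB.det_pos.ne'
  have hdetY : Y.det ≠ 0 := by
    intro h
    apply hdetB
    rw [← hYY, Matrix.det_mul, h, mul_zero]
  have hdetC : C.det ≠ 0 := by
    intro h
    have h2 : (Y * A * Y).det ≠ 0 := by
      rw [Matrix.det_mul, Matrix.det_mul]
      exact mul_ne_zero (mul_ne_zero hdetY hdetA) hdetY
    apply h2
    rw [← hCC, Matrix.det_mul, h, mul_zero]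
  have hUC : IsUnit C.det := isUnit_iff_ne_zero.2 hdetC
  have hUY : IsUnit Y.det := isUnit_iff_ne_zero.2 hdetY
  -- unitary factor
  set U := X * Y * C⁻¹ with hUdef
  have hCinvH : (C⁻¹)ᴴ = C⁻¹ := by rw [Matrix.conjTranspose_nonsing_inv, hCH]
  have hUH : Uᴴ = C⁻¹ * (Y * X) := by
    rw [hUdef, Matrix.conjTranspose_mul, Matrix.conjTranspose_mul, hCinvH, hYH, hXH]
  have hCeq : Uᴴ * (X * Y) = C := by
    rw [hUH]
    calc C⁻¹ * (Y * X) * (X * Y)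
        = C⁻¹ * (Y * (X * X) * Y) := by simp only [Matrix.mul_assoc]
      _ = C⁻¹ * (C * C) := by rw [hXX, hCC, Matrix.mul_assoc]
      _ = C := by rw [← Matrix.mul_assoc, Matrix.nonsing_inv_mul _ hUC, Matrix.one_mul]
  have hUHU : Uᴴ * U = 1 := by
    rw [hUdef, ← Matrix.mul_assoc, hCeq, Matrix.mul_nonsing_inv _ hUC]
  -- the difference matrix
  set D := X - U * Y with hDdef
  have hDH : Dᴴ = X - Y * Uᴴ := by
    rw [hDdef, Matrix.conjTranspose_sub, hXH, Matrix.conjTranspose_mul, hYH]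
  have hDD : Dᴴ * D = A + B - (X * (U * Y) + Y * Uᴴ * X) := by
    rw [hDH, hDdef, Matrix.sub_mul, Matrix.mul_sub, Matrix.mul_sub, hXX]
    have e1 : Y * Uᴴ * (U * Y) = B := by
      rw [Matrix.mul_assoc Y, ← Matrix.mul_assoc Uᴴ, hUHU, Matrix.one_mul, hYY]
    rw [e1]
    abel
  -- traces
  have htrC_eq : (Y * Uᴴ * X).trace = C.trace := by
    rw [← Matrix.trace_mul_cycle, Matrix.mul_assoc, hCeq]
  have htrXUY : (X * (U * Y)).trace = star C.trace := by
    have e2 : (X * (U * Y))ᴴ = Y * Uᴴ * X := by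
      rw [Matrix.conjTranspose_mul, Matrix.conjTranspose_mul, hXH, hYH, Matrix.mul_assoc]
    calc (X * (U * Y)).trace = star ((X * (U * Y))ᴴ).trace := by
          rw [Matrix.trace_conjTranspose, star_star]
      _ = star C.trace := by rw [e2, htrC_eq]
  have hkey : (Dᴴ * D).trace.re = A.trace.re + B.trace.re - 2 * C.trace.re := by
    rw [hDD, Matrix.trace_sub, Matrix.trace_add, Matrix.trace_add, htrXUY, htrC_eq]
    simp only [Complex.sub_re, Complex.add_re, Complex.conj_re, RCLike.star_def]
    ring
  have hposre : (Dᴴ * D).trace.re = ∑ j, ∑ i, Complex.normSq (D i j) :=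
    trace_ct_mul_self_re n D
  have hnonneg : 0 ≤ A.trace.re + B.trace.re - 2 * C.trace.re := by
    rw [← hkey, hposre]
    exact Finset.sum_nonneg fun j _ => Finset.sum_nonneg fun i _ => Complex.normSq_nonneg _
  refine ⟨hnonneg, ?_, ?_⟩
  · -- zero → A = B
    intro h
    have hDzero : D = 0 := by
      have hsum : (∑ j, ∑ i, Complex.normSq (D i j)) = 0 := by
        rw [← hposre, hkey, h]
      ext i j
      have h1 := (Finset.sum_eq_zero_iff_of_nonneg
        (fun j _ => Finset.sum_nonneg fun i _ => Complex.normSq_nonneg _)).1 hsum j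
        (Finset.mem_univ j)
      have h2 := (Finset.sum_eq_zero_iff_of_nonneg
        (fun i _ => Complex.normSq_nonneg _)).1 h1 i (Finset.mem_univ i)
      simpa using Complex.normSq_eq_zero.1 h2
    have hXUY : X = U * Y := by
      have h3 := hDzero
      rw [hDdef, sub_eq_zero] at h3
      exact h3
    have hCB : C = B := by
      calc C = Uᴴ * (X * Y) := hCeq.symm
        _ = Uᴴ * U * (Y * Y) := by rw [hXUY]; simp only [Matrix.mul_assoc]
        _ = B := by rw [hUHU, Matrix.one_mul, hYY]
    have h4 : Y * (Y * Y) * Y = Y * A * Y := by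
      rw [← hCC, hCB, ← hYY]
      simp only [Matrix.mul_assoc]
    have h5 : Y * Y = A := by
      have h6 : Y⁻¹ * (Y * (Y * Y) * Y) * Y⁻¹ = Y⁻¹ * (Y * A * Y) * Y⁻¹ := by rw [h4]
      simp only [Matrix.mul_assoc] at h6
      rw [Matrix.mul_nonsing_inv _ hUY] at h6
      simp only [Matrix.mul_one] at h6
      rw [Matrix.nonsing_inv_mul_cancel_left _ _ hUY,
        Matrix.nonsing_inv_mul_cancel_left _ _ hUY] at h6
      exact h6
    rw [← h5, hYY]
  · -- A = B → zero
    intro h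
    have hA2 : A = Y * Y := by rw [h, ← hYY]
    have hCB : B = C := by
      apply hB.posSemidef.eq_sqrt_of_sq_eq hS
      rw [pow_two, ← hYY, hA2]
      simp only [Matrix.mul_assoc]
    rw [h, ← hCB]
    ring
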